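/- Suppose β¹ ≥ 1, and set π* = min(β¹, π̄). Then (π*; μ̲, σ̄²) is a saddle point of g, i.e. g(x_π; μ̲, σ̄²) ≤ g(π*; μ̲, σ̄²) ≤ g(π*; x_μ, x_σ) for all x_π ∈ [π̲, π̄] and all (x_μ, x_σ) ∈ B. -/

import Mathlib

set_option maxHeartbeats 1000000


/-- Borrow-to-buy regime: if `β¹ ≥ 1` then `(min β¹ π̄; μ̲, σ̄²)` is a saddle point of `g`. -/
theorem saddle_point_borrow_to_buy
    (p r R : ℝ) (hp : p < 1) (hrR : r ≤ R)
    (πlo πhi : ℝ) (hπlo : πlo ≤ 0) (hπhi : 1 ≤ πhi)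
    (μlo μhi σlo σhi : ℝ) (hμ : μlo ≤ μhi)
    (hσlo : 0 ≤ σlo) (hσ : σlo ≤ σhi) (hσhi : 0 < σhi)
    (g : ℝ → ℝ → ℝ → ℝ)
    (hg : ∀ xπ xμ xσ, g xπ xμ xσ =
      (p - 1) / 2 * xσ * xπ ^ 2 + xμ * xπ + r * max (1 - xπ) 0 - R * max (xπ - 1) 0)
    (β1 : ℝ) (hβ1 : β1 = (μlo - R) / ((1 - p) * σhi ^ 2))
    (hcase : 1 ≤ β1) :
    (∀ xπ ∈ Set.Icc πlo πhi, g xπ μlo (σhi ^ 2) ≤ g (min β1 πhi) μlo (σhi ^ 2)) ∧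
    (∀ xμ ∈ Set.Icc μlo μhi, ∀ xσ ∈ Set.Icc (σlo ^ 2) (σhi ^ 2),
      g (min β1 πhi) μlo (σhi ^ 2) ≤ g (min β1 πhi) xμ xσ) := by
  set π := min β1 πhi with hπdef
  have hπ1 : 1 ≤ π := le_min hcase hπhi
  have hπβ : π ≤ β1 := min_le_left _ _
  have ha : 0 < (1 - p) * σhi ^ 2 := by
    have h1p : 0 < 1 - p := by linarith
    positivity
  have hμR : μlo - R = (1 - p) * σhi ^ 2 * β1 := by
    rw [hβ1]; field_simp; exact (mul_div_cancel_right₀ _ (sub_ne_zero.2 (ne_of_gt hp))).symm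
  have hmax1 : max (1 - π) 0 = 0 := max_eq_right (by linarith)
  have hmax2 : max (π - 1) 0 = π - 1 := max_eq_left (by linarith)
  constructor
  · rintro xπ ⟨hx1, hx2⟩
    rw [hg, hg, hmax1, hmax2]
    rcases le_total xπ 1 with hx | hx
    · rw [max_eq_left (by linarith), max_eq_right (by linarith)]
      have h2 : 0 ≤ (1 - xπ) * ((μlo - r) - (1 - p) * σhi ^ 2 * (1 + xπ) / 2) := by
        apply mul_nonneg (by linarith)
        nlinarith [mul_le_mul_of_nonneg_left (show (1+xπ)/2 ≤ 1 by linarith) ha.le,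
          mul_le_mul_of_nonneg_left hcase ha.le]
      have h3 : 0 ≤ (1 - p) * σhi ^ 2 * ((π - 1) * (β1 - (π + 1) / 2)) := by
        apply mul_nonneg ha.le
        apply mul_nonneg (by linarith)
        linarith
      nlinarith [h2, h3]
    · rw [max_eq_right (by linarith), max_eq_left (by linarith)]
      rcases min_cases β1 πhi with ⟨he, _⟩ | ⟨he, hle⟩
      · rw [hπdef, he]
        nlinarith [mul_nonneg ha.le (sq_nonneg (β1 - xπ))]
      · rw [hπdef, he] at *
        have h4 : 0 ≤ (1 - p) * σhi ^ 2 * ((πhi - xπ) * (β1 - (πhi + xπ) / 2)) := by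
          apply mul_nonneg ha.le
          apply mul_nonneg (by linarith)
          linarith
        nlinarith [h4]
  · rintro xμ ⟨hμ1, _⟩ xσ ⟨_, hσ2⟩
    rw [hg, hg, hmax1, hmax2]
    have hA : (p - 1) / 2 * σhi ^ 2 * π ^ 2 ≤ (p - 1) / 2 * xσ * π ^ 2 := by
      nlinarith [mul_nonneg (sub_nonneg.2 hσ2) (sq_nonneg π)]
    have hB : μlo * π ≤ xμ * π := by
      nlinarith [mul_nonneg (sub_nonneg.2 hμ1) (by linarith : (0:ℝ) ≤ π)]
    linarith
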